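/- Let f : ℝⁿ → ℝᵐ be a map which is continuously differentiable (C¹) on a neighbourhood of 0. Then the germ at the point p₀ = (0, f(0)) of the graph G = {(x, f(x)) : x ∈ ℝⁿ} ⊆ ℝⁿ × ℝᵐ is Lipschitz normally embedded: there exist C ≥ 1 and δ > 0 such that for all p, q ∈ G with ‖p − p₀‖ < δ and ‖q − p₀‖ < δ, the inner (length) distance between p and q inside G ∩ B(p₀, δ) is at most C·‖p − q‖. -/

import Mathlib

open Filter Set
open scoped NNReal

section helpers
variable {E F : Type*} [NormedAddCommGroup E] [NormedSpace ℝ E]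
  [NormedAddCommGroup F] [NormedSpace ℝ F]

/-- On a set where `f` is `ε`-approximated by the linear map `A`, the value of `f` at a convex
combination of two points is close to the convex combination of the values. -/
theorem approx_conv {f : E → F} {A : E →L[ℝ] F} {s : Set E} {ε : ℝ≥0}
    (happ : ApproximatesLinearOn f A s ε) {u v : E} (hu : u ∈ s) (hv : v ∈ s) {t : ℝ}
    (ht0 : 0 ≤ t) (ht1 : t ≤ 1) (hz : (1 - t) • u + t • v ∈ s) :
    ‖f ((1 - t) • u + t • v) - ((1 - t) • f u + t • f v)‖ ≤
      2 * ε * min t (1 - t) * ‖u - v‖ := by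
  set z := (1 - t) • u + t • v with hzdef
  have h1 : z - u = t • (v - u) := by rw [hzdef]; module
  have h2 : z - v = (1 - t) • (u - v) := by rw [hzdef]; module
  have h3 : A (v - u) = -A (u - v) := by rw [← neg_sub, map_neg]
  have e : f z - ((1 - t) • f u + t • f v) =
      (1 - t) • (f z - f u - A (z - u)) + t • (f z - f v - A (z - v)) := by
    rw [h1, h2, map_smul, map_smul, h3]
    module
  have b1 : ‖f z - f u - A (z - u)‖ ≤ ε * ‖z - u‖ := happ z hz u hu
  have b2 : ‖f z - f v - A (z - v)‖ ≤ ε * ‖z - v‖ := happ z hz v hv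
  have n1 : ‖z - u‖ = t * ‖u - v‖ := by
    rw [h1, norm_smul, Real.norm_eq_abs, abs_of_nonneg ht0, norm_sub_rev]
  have n2 : ‖z - v‖ = (1 - t) * ‖u - v‖ := by
    rw [h2, norm_smul, Real.norm_eq_abs, abs_of_nonneg (by linarith)]
  have hmin : t * (1 - t) ≤ min t (1 - t) := by
    rcases le_total t (1 - t) with h | h
    · rw [min_eq_left h]; nlinarith
    · rw [min_eq_right h]; nlinarith
  calc ‖f z - ((1 - t) • f u + t • f v)‖
      ≤ ‖(1 - t) • (f z - f u - A (z - u))‖ + ‖t • (f z - f v - A (z - v))‖ := by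
        rw [e]; exact norm_add_le _ _
    _ ≤ (1 - t) * (ε * ‖z - u‖) + t * (ε * ‖z - v‖) := by
        rw [norm_smul, norm_smul, Real.norm_eq_abs, Real.norm_eq_abs,
          abs_of_nonneg (by linarith : (0:ℝ) ≤ 1 - t), abs_of_nonneg ht0]
        exact add_le_add (mul_le_mul_of_nonneg_left b1 (by linarith))
          (mul_le_mul_of_nonneg_left b2 ht0)
    _ = 2 * (t * (1 - t)) * (ε * ‖u - v‖) := by rw [n1, n2]; ring
    _ ≤ 2 * ε * min t (1 - t) * ‖u - v‖ := by
        have hε : (0:ℝ) ≤ ε := ε.coe_nonneg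
        nlinarith [mul_le_mul_of_nonneg_right hmin (mul_nonneg hε (norm_nonneg (u - v)))]

/-- Radial version : the value of `f` at `(1-t) • u` is close to `f 0`. -/
theorem approx_radial {f : E → F} {A : E →L[ℝ] F} {s : Set E} {ε : ℝ≥0}
    (happ : ApproximatesLinearOn f A s ε) {u : E} (hu : u ∈ s) (h0 : (0:E) ∈ s) {t : ℝ}
    (ht0 : 0 ≤ t) (ht1 : t ≤ 1) (hz : (1 - t) • u ∈ s) :
    ‖f ((1 - t) • u) - f 0‖ ≤ (1 - t) * ‖f u - f 0‖ + 2 * ε * min t (1 - t) * ‖u‖ := by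
  have hz' : (1 - t) • u + t • (0:E) = (1 - t) • u := by simp
  have key := approx_conv happ hu h0 ht0 ht1 (by rw [hz']; exact hz)
  rw [hz'] at key
  have e : f ((1 - t) • u) - f 0 =
      (f ((1 - t) • u) - ((1 - t) • f u + t • f 0)) + (1 - t) • (f u - f 0) := by module
  calc ‖f ((1 - t) • u) - f 0‖
      ≤ ‖f ((1 - t) • u) - ((1 - t) • f u + t • f 0)‖ + ‖(1 - t) • (f u - f 0)‖ := by
        rw [e]; exact norm_add_le _ _
    _ ≤ 2 * ε * min t (1 - t) * ‖u‖ + (1 - t) * ‖f u - f 0‖ := by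
        rw [norm_smul, Real.norm_eq_abs, abs_of_nonneg (by linarith : (0:ℝ) ≤ 1 - t)]
        gcongr
        simpa using key
    _ = _ := by ring

end helpers

noncomputable def innerDist {E : Type*} [NormedAddCommGroup E] [NormedSpace ℝ E]
    (X : Set E) (x y : E) : ENNReal :=
  ⨅ (γ : ℝ → E) (_ : ContinuousOn γ (Set.Icc 0 1)) (_ : γ '' Set.Icc 0 1 ⊆ X)
    (_ : γ 0 = x) (_ : γ 1 = y), eVariationOn γ (Set.Icc 0 1)

set_option maxHeartbeats 1000000

theorem c1_graph_germ_lne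
    {n m : ℕ} (f : EuclideanSpace ℝ (Fin n) → EuclideanSpace ℝ (Fin m))
    (U : Set (EuclideanSpace ℝ (Fin n))) (hU : U ∈ nhds (0 : EuclideanSpace ℝ (Fin n)))
    (hf : ContDiffOn ℝ 1 f U) :
    ∃ C : ℝ, 1 ≤ C ∧ ∃ δ : ℝ, 0 < δ ∧
      ∀ p ∈ {q : EuclideanSpace ℝ (Fin n) × EuclideanSpace ℝ (Fin m) | q.2 = f q.1},
      ∀ q ∈ {q : EuclideanSpace ℝ (Fin n) × EuclideanSpace ℝ (Fin m) | q.2 = f q.1},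
        ‖p - (0, f 0)‖ < δ → ‖q - (0, f 0)‖ < δ →
          innerDist ({q : EuclideanSpace ℝ (Fin n) × EuclideanSpace ℝ (Fin m) | q.2 = f q.1} ∩
              Metric.ball ((0 : EuclideanSpace ℝ (Fin n)), f 0) δ) p q ≤
            ENNReal.ofReal (C * ‖p - q‖) := by
  classical
  have hfa : ContDiffAt ℝ 1 f 0 := hf.contDiffAt hU
  have hd : HasStrictFDerivAt f (fderiv ℝ f 0) 0 := hfa.hasStrictFDerivAt one_ne_zero
  obtain ⟨A, hA⟩ : ∃ A : EuclideanSpace ℝ (Fin n) →L[ℝ] EuclideanSpace ℝ (Fin m),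
      A = fderiv ℝ f 0 := ⟨_, rfl⟩
  rw [← hA] at hd
  obtain ⟨s, hs_nhds, happ⟩ := hd.approximates_deriv_on_nhds
    (Or.inr (show (0:ℝ≥0) < 1/16 by norm_num))
  obtain ⟨δ, hδ, hball⟩ := Metric.mem_nhds_iff.1 hs_nhds
  have hcoe : ((1/16 : ℝ≥0) : ℝ) = 1/16 := by norm_num
  obtain ⟨C, hC⟩ : ∃ C : ℝ, C = 3 * (‖A‖ + 1) := ⟨_, rfl⟩
  have hC1 : 1 ≤ C := by rw [hC]; linarith [norm_nonneg A]
  refine ⟨C, hC1, δ, hδ, ?_⟩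
  intro p hp q hq hpδ hqδ
  simp only [mem_setOf_eq] at hp hq
  set x := p.1 with hx'
  set y := q.1 with hy'
  have hpx : p = (x, f x) := Prod.ext rfl hp
  have hqy : q = (y, f y) := Prod.ext rfl hq
  have hx : ‖x‖ < δ := by
    have := lt_of_le_of_lt (norm_fst_le (p - (0, f 0))) hpδ
    simpa using this
  have hy : ‖y‖ < δ := by
    have := lt_of_le_of_lt (norm_fst_le (q - (0, f 0))) hqδ
    simpa using this
  have hfx : ‖f x - f 0‖ < δ := by
    have := lt_of_le_of_lt (norm_snd_le (p - (0, f 0))) hpδ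
    simpa [hp] using this
  have hfy : ‖f y - f 0‖ < δ := by
    have := lt_of_le_of_lt (norm_snd_le (q - (0, f 0))) hqδ
    simpa [hq] using this
  have hmem_s : ∀ u : EuclideanSpace ℝ (Fin n), ‖u‖ < δ → u ∈ s := by
    intro u hu
    exact hball (by simpa [Metric.mem_ball, dist_zero_right] using hu)
  have hxs : x ∈ s := hmem_s x hx
  have hys : y ∈ s := hmem_s y hy
  have h0s : (0 : EuclideanSpace ℝ (Fin n)) ∈ s := hmem_s 0 (by simpa using hδ)
  obtain ⟨d, hd'⟩ : ∃ d : ℝ, d = ‖x - y‖ := ⟨_, rfl⟩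
  have hd0 : 0 ≤ d := hd' ▸ norm_nonneg _
  have hdpq : d ≤ ‖p - q‖ := by
    rw [hd']
    have := norm_fst_le (p - q)
    simpa using this
  have hd2δ : d ≤ 2 * δ := by
    rw [hd']
    have := norm_sub_le x y
    linarith
  obtain ⟨τ, hτ'⟩ : ∃ τ : ℝ, τ = d / (4 * δ) := ⟨_, rfl⟩
  have hτ0 : 0 ≤ τ := by
    rw [hτ']; exact div_nonneg hd0 (by linarith)
  have hτhalf : τ ≤ 1/2 := by
    rw [hτ', div_le_iff₀ (by linarith)]; linarith
  have h4δτ : 4 * δ * τ = d := by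
    rw [hτ']; field_simp
  -- the path
  obtain ⟨θ, hθd⟩ : ∃ θ : ℝ → ℝ, ∀ t, θ t = min 1 (max 0 (2*t - 1/2)) := ⟨_, fun _ => rfl⟩
  obtain ⟨mf, hmfd⟩ : ∃ mf : ℝ → ℝ, ∀ t, mf t = min 1 (min (4*t) (4 - 4*t)) :=
    ⟨_, fun _ => rfl⟩
  obtain ⟨w, hwd⟩ : ∃ w : ℝ → EuclideanSpace ℝ (Fin n),
      ∀ t, w t = (1 - τ * mf t) • ((1 - θ t) • x + θ t • y) := ⟨_, fun _ => rfl⟩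
  obtain ⟨γ, hγd⟩ : ∃ γ : ℝ → EuclideanSpace ℝ (Fin n) × EuclideanSpace ℝ (Fin m),
      ∀ t, γ t = (w t, f (w t)) := ⟨_, fun _ => rfl⟩
  have hθ0 : ∀ t, 0 ≤ θ t := fun t => by
    rw [hθd t]; exact le_min zero_le_one (le_max_left 0 _)
  have hθ1 : ∀ t, θ t ≤ 1 := fun t => by rw [hθd t]; exact min_le_left _ _
  have hmf0 : ∀ t ∈ Icc (0:ℝ) 1, 0 ≤ mf t := by
    rintro t ⟨h0, h1⟩
    rw [hmfd t]
    exact le_min zero_le_one (le_min (by linarith) (by linarith))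
  have hmf1 : ∀ t, mf t ≤ 1 := fun t => by rw [hmfd t]; exact min_le_left _ _
  have hwnorm : ∀ t ∈ Icc (0:ℝ) 1, ‖w t‖ ≤ max ‖x‖ ‖y‖ := by
    intro t ht
    have h1 : ‖(1 - θ t) • x + θ t • y‖ ≤ (1 - θ t) * ‖x‖ + θ t * ‖y‖ := by
      refine le_trans (norm_add_le _ _) ?_
      rw [norm_smul, norm_smul, Real.norm_eq_abs, Real.norm_eq_abs,
        abs_of_nonneg (by linarith [hθ1 t]), abs_of_nonneg (hθ0 t)]
    have h2 : (1 - θ t) * ‖x‖ + θ t * ‖y‖ ≤ max ‖x‖ ‖y‖ := by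
      have hxm := mul_le_mul_of_nonneg_left (le_max_left ‖x‖ ‖y‖)
        (by linarith [hθ1 t] : (0:ℝ) ≤ 1 - θ t)
      have hym := mul_le_mul_of_nonneg_left (le_max_right ‖x‖ ‖y‖) (hθ0 t)
      linarith
    have h3 : |1 - τ * mf t| ≤ 1 := by
      have pr1 : 0 ≤ τ * mf t := mul_nonneg hτ0 (hmf0 t ht)
      have pr2 : τ * mf t ≤ (1/2) * 1 := mul_le_mul hτhalf (hmf1 t) (hmf0 t ht) (by norm_num)
      rw [abs_le]
      constructor <;> linarith
    calc ‖w t‖ = |1 - τ * mf t| * ‖(1 - θ t) • x + θ t • y‖ := by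
          rw [hwd t, norm_smul, Real.norm_eq_abs]
      _ ≤ 1 * (max ‖x‖ ‖y‖) := by
          apply mul_le_mul h3 (le_trans h1 h2) (norm_nonneg _) zero_le_one
      _ = max ‖x‖ ‖y‖ := one_mul _
  have hwδ : ∀ t ∈ Icc (0:ℝ) 1, ‖w t‖ < δ :=
    fun t ht => lt_of_le_of_lt (hwnorm t ht) (max_lt hx hy)
  have hws : ∀ t ∈ Icc (0:ℝ) 1, w t ∈ s := fun t ht => hmem_s _ (hwδ t ht)
  -- the key estimate on ‖f (w t) - f 0‖
  have hfw : ∀ t ∈ Icc (0:ℝ) 1, ‖f (w t) - f 0‖ < δ := by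
    rintro t ⟨ht0, ht1⟩
    rcases le_or_gt t (1/4) with hc1 | hc1
    · -- first corner : w t = (1 - τ*(4*t)) • x
      have hθt : θ t = 0 := by
        rw [hθd t, max_eq_left (by linarith), min_eq_right zero_le_one]
      have hmt : mf t = 4 * t := by
        rw [hmfd t, min_eq_left (show (4*t:ℝ) ≤ 4 - 4*t by linarith),
          min_eq_right (show (4*t:ℝ) ≤ 1 by linarith)]
      have hwt : w t = (1 - τ * (4*t)) • x := by
        rw [hwd t, hθt, hmt]; simp
      have ht'0 : 0 ≤ τ * (4*t) := by positivity
      have ht'h : τ * (4*t) ≤ 1/2 := by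
        have := mul_le_mul_of_nonneg_left (show 4*t ≤ (1:ℝ) by linarith) hτ0
        linarith
      have hzs : (1 - τ * (4*t)) • x ∈ s := by rw [← hwt]; exact hws t ⟨ht0, ht1⟩
      have key := approx_radial happ hxs h0s ht'0 (by linarith) hzs
      rw [hcoe] at key
      have hmin : min (τ * (4*t)) (1 - τ * (4*t)) ≤ τ * (4*t) := min_le_left _ _
      have hmin0 : 0 ≤ min (τ * (4*t)) (1 - τ * (4*t)) := le_min ht'0 (by linarith)
      rw [hwt]
      calc ‖f ((1 - τ * (4*t)) • x) - f 0‖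
          ≤ (1 - τ * (4*t)) * ‖f x - f 0‖ + 2 * (1/16) * min (τ * (4*t)) (1 - τ * (4*t)) * ‖x‖ :=
            key
        _ < δ := by
            have p1 := mul_lt_mul_of_pos_left hfx
              (show (0:ℝ) < 1 - τ * (4*t) by linarith)
            have p2 := mul_le_mul hmin hx.le (norm_nonneg x) ht'0
            have p3 : 0 ≤ τ * (4*t) * δ := mul_nonneg ht'0 hδ.le
            linarith
    rcases lt_or_ge t (3/4) with hc2 | hc2
    · -- middle : w t = (1-θt) • ((1-τ)•x) + θt • ((1-τ)•y)
      have hmt : mf t = 1 := by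
        rw [hmfd t, min_eq_left (le_min (by linarith) (by linarith))]
      have hwt : w t = (1 - θ t) • ((1-τ) • x) + θ t • ((1-τ) • y) := by
        rw [hwd t, hmt]; module
      have hτ1 : τ ≤ 1 := by linarith
      have hxs' : (1-τ) • x ∈ s := by
        apply hmem_s
        rw [norm_smul, Real.norm_eq_abs, abs_of_nonneg (by linarith)]
        have := mul_le_mul_of_nonneg_right (show 1-τ ≤ (1:ℝ) by linarith) (norm_nonneg x)
        linarith
      have hys' : (1-τ) • y ∈ s := by
        apply hmem_s
        rw [norm_smul, Real.norm_eq_abs, abs_of_nonneg (by linarith)]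
        have := mul_le_mul_of_nonneg_right (show 1-τ ≤ (1:ℝ) by linarith) (norm_nonneg y)
        linarith
      have hzs : (1 - θ t) • ((1-τ) • x) + θ t • ((1-τ) • y) ∈ s := by
        rw [← hwt]; exact hws t ⟨ht0, ht1⟩
      have key := approx_conv happ hxs' hys' (hθ0 t) (hθ1 t) hzs
      rw [hcoe] at key
      have Bx := approx_radial happ hxs h0s hτ0 hτ1 hxs'
      have By := approx_radial happ hys h0s hτ0 hτ1 hys'
      rw [hcoe] at Bx By
      have hsubxy : ‖(1-τ) • x - (1-τ) • y‖ = (1-τ) * d := by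
        rw [← smul_sub, norm_smul, Real.norm_eq_abs, abs_of_nonneg (by linarith), hd']
      have hminθ : min (θ t) (1 - θ t) ≤ 1/2 := by
        rcases le_total (θ t) (1 - θ t) with h | h
        · rw [min_eq_left h]; linarith
        · rw [min_eq_right h]; linarith
      have hminθ0 : 0 ≤ min (θ t) (1 - θ t) := le_min (hθ0 t) (by linarith [hθ1 t])
      have hminτ : min τ (1 - τ) ≤ τ := min_le_left _ _
      have hminτ0 : 0 ≤ min τ (1 - τ) := le_min hτ0 (by linarith)
      -- assemble
      have e : f (w t) - f 0 =
          (f ((1 - θ t) • ((1-τ) • x) + θ t • ((1-τ) • y)) -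
            ((1 - θ t) • f ((1-τ) • x) + θ t • f ((1-τ) • y))) +
          ((1 - θ t) • (f ((1-τ) • x) - f 0) + θ t • (f ((1-τ) • y) - f 0)) := by
        rw [hwt]; module
      have tot : ‖f (w t) - f 0‖ ≤
          2 * (1/16) * min (θ t) (1 - θ t) * ((1-τ) * d) +
          ((1 - θ t) * ‖f ((1-τ) • x) - f 0‖ + θ t * ‖f ((1-τ) • y) - f 0‖) := by
        rw [e]
        refine le_trans (norm_add_le _ _) (add_le_add ?_ ?_)
        · rw [← hsubxy]; exact key
        · refine le_trans (norm_add_le _ _) ?_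
          rw [norm_smul, norm_smul, Real.norm_eq_abs, Real.norm_eq_abs,
            abs_of_nonneg (by linarith [hθ1 t]), abs_of_nonneg (hθ0 t)]
      have hBx : ‖f ((1-τ) • x) - f 0‖ ≤ (1-τ) * ‖f x - f 0‖ + (1/8) * τ * δ := by
        refine le_trans Bx ?_
        have : 2 * (1/16) * min τ (1-τ) * ‖x‖ ≤ (1/8) * τ * δ := by
          have := mul_le_mul hminτ hx.le (norm_nonneg x) hτ0
          linarith
        linarith
      have hBy : ‖f ((1-τ) • y) - f 0‖ ≤ (1-τ) * ‖f y - f 0‖ + (1/8) * τ * δ := by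
        refine le_trans By ?_
        have : 2 * (1/16) * min τ (1-τ) * ‖y‖ ≤ (1/8) * τ * δ := by
          have := mul_le_mul hminτ hy.le (norm_nonneg y) hτ0
          linarith
        linarith
      have hkeyb : 2 * (1/16) * min (θ t) (1 - θ t) * ((1-τ) * d) ≤ (1/4) * τ * δ := by
        have h1 : (1-τ) * d ≤ d := by
          have := mul_le_mul_of_nonneg_right (show 1-τ ≤ (1:ℝ) by linarith) hd0
          linarith
        have h2 : min (θ t) (1 - θ t) * ((1-τ) * d) ≤ (1/2) * d :=
          mul_le_mul hminθ h1 (mul_nonneg (by linarith) hd0) (by norm_num)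
        linarith [h4δτ]
      have hfinal : ‖f (w t) - f 0‖ ≤
          (1/4) * τ * δ + ((1 - θ t) * ((1-τ) * ‖f x - f 0‖ + (1/8) * τ * δ) +
            θ t * ((1-τ) * ‖f y - f 0‖ + (1/8) * τ * δ)) := by
        refine le_trans tot (add_le_add hkeyb (add_le_add ?_ ?_))
        · exact mul_le_mul_of_nonneg_left hBx (by linarith [hθ1 t])
        · exact mul_le_mul_of_nonneg_left hBy (hθ0 t)
      have hθt0 := hθ0 t
      have hθt1 := hθ1 t
      have hcδ : (1 - θ t) * ‖f x - f 0‖ + θ t * ‖f y - f 0‖ < δ := by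
        rcases le_total ‖f x - f 0‖ ‖f y - f 0‖ with hab | hab
        · have := mul_le_mul_of_nonneg_left hab (by linarith : (0:ℝ) ≤ 1 - θ t)
          linarith
        · have := mul_le_mul_of_nonneg_left hab (hθ0 t)
          linarith
      have hp := mul_pos (show (0:ℝ) < 1 - τ by linarith)
        (show (0:ℝ) < δ - ((1 - θ t) * ‖f x - f 0‖ + θ t * ‖f y - f 0‖) by linarith)
      have hq : 0 ≤ τ * δ := mul_nonneg hτ0 hδ.le
      linarith [hfinal, hp, hq]
    · -- last corner : w t = (1 - τ*(4-4*t)) • y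
      have hθt : θ t = 1 := by
        rw [hθd t, max_eq_right (by linarith), min_eq_left (by linarith)]
      have hmt : mf t = 4 - 4*t := by
        rw [hmfd t, min_eq_right (show (4:ℝ) - 4*t ≤ 4*t by linarith),
          min_eq_right (show (4:ℝ) - 4*t ≤ 1 by linarith)]
      have hwt : w t = (1 - τ * (4-4*t)) • y := by
        rw [hwd t, hθt, hmt]; simp
      have ht'0 : 0 ≤ τ * (4-4*t) := by
        apply mul_nonneg hτ0; linarith
      have ht'h : τ * (4-4*t) ≤ 1/2 := by
        have := mul_le_mul_of_nonneg_left (show 4-4*t ≤ (1:ℝ) by linarith) hτ0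
        linarith
      have hzs : (1 - τ * (4-4*t)) • y ∈ s := by rw [← hwt]; exact hws t ⟨ht0, ht1⟩
      have key := approx_radial happ hys h0s ht'0 (by linarith) hzs
      rw [hcoe] at key
      have hmin : min (τ * (4-4*t)) (1 - τ * (4-4*t)) ≤ τ * (4-4*t) := min_le_left _ _
      have hmin0 : 0 ≤ min (τ * (4-4*t)) (1 - τ * (4-4*t)) := le_min ht'0 (by linarith)
      rw [hwt]
      calc ‖f ((1 - τ * (4-4*t)) • y) - f 0‖
          ≤ (1 - τ * (4-4*t)) * ‖f y - f 0‖ +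
            2 * (1/16) * min (τ * (4-4*t)) (1 - τ * (4-4*t)) * ‖y‖ := key
        _ < δ := by
            have p1 := mul_lt_mul_of_pos_left hfy
              (show (0:ℝ) < 1 - τ * (4-4*t) by linarith)
            have p2 := mul_le_mul hmin hy.le (norm_nonneg y) ht'0
            have p3 : 0 ≤ τ * (4-4*t) * δ := mul_nonneg ht'0 hδ.le
            linarith
  -- continuity
  have hθc : Continuous θ := by
    rw [funext hθd]
    exact continuous_const.min (continuous_const.max
      ((continuous_const.mul continuous_id).sub continuous_const))
  have hmfc : Continuous mf := by
    rw [funext hmfd]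
    exact continuous_const.min ((continuous_const.mul continuous_id).min
      (continuous_const.sub (continuous_const.mul continuous_id)))
  have hwc : Continuous w := by
    rw [funext hwd]
    exact ((continuous_const.sub (continuous_const.mul hmfc)).smul
      (((continuous_const.sub hθc).smul continuous_const).add (hθc.smul continuous_const)))
  have hγcont : ContinuousOn γ (Icc (0:ℝ) 1) := by
    rw [funext hγd]
    exact (hwc.continuousOn).prodMk
      ((happ.continuousOn).comp hwc.continuousOn (fun t ht => hws t ht))
  -- membership
  have hγmem : γ '' Icc (0:ℝ) 1 ⊆
      {q : EuclideanSpace ℝ (Fin n) × EuclideanSpace ℝ (Fin m) | q.2 = f q.1} ∩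
        Metric.ball ((0 : EuclideanSpace ℝ (Fin n)), f 0) δ := by
    rintro _ ⟨t, ht, rfl⟩
    rw [hγd t]
    refine ⟨rfl, ?_⟩
    rw [Metric.mem_ball, Prod.dist_eq]
    apply max_lt
    · simpa [dist_zero_right] using hwδ t ht
    · simpa [dist_eq_norm] using hfw t ht
  -- endpoints
  have hw0 : w 0 = x := by
    have hθ0' : θ 0 = 0 := by
      rw [hθd 0]; norm_num
    have hmf0' : mf 0 = 0 := by
      rw [hmfd 0]; norm_num
    rw [hwd 0, hθ0', hmf0']; simp
  have hw1 : w 1 = y := by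
    have hθ1' : θ 1 = 1 := by
      rw [hθd 1]; norm_num
    have hmf1' : mf 1 = 0 := by
      rw [hmfd 1]; norm_num
    rw [hwd 1, hθ1', hmf1']; simp
  have hγ0 : γ 0 = p := by rw [hγd 0, hw0, hpx]
  have hγ1 : γ 1 = q := by rw [hγd 1, hw1, hqy]
  -- Lipschitz bound on γ
  have habs4 : ∀ a b : ℝ, |4*a - 4*b| = 4 * |a - b| := by
    intro a b
    rw [show 4*a - 4*b = 4*(a-b) by ring, abs_mul]
    norm_num
  have hmlip : ∀ a b : ℝ, |mf a - mf b| ≤ 4 * |a - b| := by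
    intro a b
    rw [hmfd a, hmfd b]
    refine le_trans (abs_min_sub_min_le_max _ _ _ _) ?_
    rw [sub_self, abs_zero]
    refine max_le (by positivity) ?_
    refine le_trans (abs_min_sub_min_le_max _ _ _ _) ?_
    apply max_le
    · rw [habs4]
    · rw [show (4 - 4*a) - (4 - 4*b) = 4*b - 4*a by ring, habs4, abs_sub_comm]
  have hθlip : ∀ a b : ℝ, |θ a - θ b| ≤ 2 * |a - b| := by
    intro a b
    rw [hθd a, hθd b]
    refine le_trans (abs_min_sub_min_le_max _ _ _ _) ?_
    rw [sub_self, abs_zero]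
    refine max_le (by positivity) ?_
    refine le_trans (abs_max_sub_max_le_max _ _ _ _) ?_
    refine max_le (by simp) ?_
    rw [show (2*a - 1/2) - (2*b - 1/2) = 2*(a-b) by ring, abs_mul]
    norm_num
  have hwlip : ∀ a ∈ Icc (0:ℝ) 1, ∀ b ∈ Icc (0:ℝ) 1,
      ‖w a - w b‖ ≤ 3 * d * |a - b| := by
    intro a ha b hb
    have e : w a - w b = (τ * (mf b - mf a)) • ((1 - θ a) • x + θ a • y) +
        ((1 - τ * mf b) * (θ a - θ b)) • (y - x) := by
      rw [hwd a, hwd b]; module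
    have hv : ‖(1 - θ a) • x + θ a • y‖ ≤ δ := by
      have h1 : ‖(1 - θ a) • x + θ a • y‖ ≤ (1 - θ a) * ‖x‖ + θ a * ‖y‖ := by
        refine le_trans (norm_add_le _ _) ?_
        rw [norm_smul, norm_smul, Real.norm_eq_abs, Real.norm_eq_abs,
          abs_of_nonneg (by linarith [hθ1 a]), abs_of_nonneg (hθ0 a)]
      have p1 := mul_le_mul_of_nonneg_left hx.le (by linarith [hθ1 a] : (0:ℝ) ≤ 1 - θ a)
      have p2 := mul_le_mul_of_nonneg_left hy.le (hθ0 a)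
      linarith
    have hσb : |1 - τ * mf b| ≤ 1 := by
      have pr1 : 0 ≤ τ * mf b := mul_nonneg hτ0 (hmf0 b hb)
      have pr2 : τ * mf b ≤ (1/2) * 1 := mul_le_mul hτhalf (hmf1 b) (hmf0 b hb) (by norm_num)
      rw [abs_le]
      constructor <;> linarith
    calc ‖w a - w b‖ ≤ ‖(τ * (mf b - mf a)) • ((1 - θ a) • x + θ a • y)‖ +
          ‖((1 - τ * mf b) * (θ a - θ b)) • (y - x)‖ := by rw [e]; exact norm_add_le _ _
      _ = |τ * (mf b - mf a)| * ‖(1 - θ a) • x + θ a • y‖ +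
          |(1 - τ * mf b) * (θ a - θ b)| * ‖y - x‖ := by
          rw [norm_smul, norm_smul, Real.norm_eq_abs, Real.norm_eq_abs]
      _ ≤ (τ * (4 * |a - b|)) * δ + (1 * (2 * |a - b|)) * d := by
          apply add_le_add
          · apply mul_le_mul _ hv (norm_nonneg _) (by positivity)
            rw [abs_mul, abs_of_nonneg hτ0, abs_sub_comm]
            exact mul_le_mul_of_nonneg_left (hmlip a b) hτ0
          · rw [show ‖y - x‖ = d by rw [hd', norm_sub_rev], abs_mul]
            exact mul_le_mul (mul_le_mul hσb (hθlip a b) (abs_nonneg _) zero_le_one)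
              le_rfl hd0 (by positivity)
      _ ≤ 3 * d * |a - b| := by
          have e4 : τ * (4 * |a - b|) * δ = d * |a - b| := by rw [← h4δτ]; ring
          linarith [e4, mul_nonneg hd0 (abs_nonneg (a - b))]
  have hflip : ∀ a ∈ Icc (0:ℝ) 1, ∀ b ∈ Icc (0:ℝ) 1,
      ‖f (w a) - f (w b)‖ ≤ (‖A‖ + 1) * ‖w a - w b‖ := by
    intro a ha b hb
    have h1 := happ (w a) (hws a ha) (w b) (hws b hb)
    rw [hcoe] at h1
    have h2 : ‖A (w a - w b)‖ ≤ ‖A‖ * ‖w a - w b‖ := A.le_opNorm _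
    calc ‖f (w a) - f (w b)‖
        ≤ ‖f (w a) - f (w b) - A (w a - w b)‖ + ‖A (w a - w b)‖ := by
          simpa using norm_add_le (f (w a) - f (w b) - A (w a - w b)) (A (w a - w b))
      _ ≤ (1/16) * ‖w a - w b‖ + ‖A‖ * ‖w a - w b‖ := add_le_add h1 h2
      _ ≤ (‖A‖ + 1) * ‖w a - w b‖ := by linarith [norm_nonneg (w a - w b)]
  have hCd0 : 0 ≤ C * d := mul_nonneg (by linarith) hd0
  have hγlip : LipschitzOnWith (Real.toNNReal (C * d)) γ (Icc (0:ℝ) 1) := by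
    rw [lipschitzOnWith_iff_dist_le_mul]
    intro a ha b hb
    rw [Real.coe_toNNReal _ hCd0, Prod.dist_eq]
    apply max_le
    · rw [hγd a, hγd b, dist_eq_norm, Real.dist_eq]
      calc ‖w a - w b‖ ≤ 3 * d * |a - b| := hwlip a ha b hb
        _ ≤ C * d * |a - b| := by
            apply mul_le_mul_of_nonneg_right _ (abs_nonneg _)
            rw [hC]
            exact mul_le_mul_of_nonneg_right (by linarith [norm_nonneg A]) hd0
    · rw [hγd a, hγd b, dist_eq_norm, Real.dist_eq]
      calc ‖f (w a) - f (w b)‖ ≤ (‖A‖ + 1) * ‖w a - w b‖ := hflip a ha b hb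
        _ ≤ (‖A‖ + 1) * (3 * d * |a - b|) := by
            apply mul_le_mul_of_nonneg_left (hwlip a ha b hb)
            positivity
        _ = C * d * |a - b| := by rw [hC]; ring
  -- variation bound
  have hvar : eVariationOn γ (Icc (0:ℝ) 1) ≤ ENNReal.ofReal (C * d) := by
    have h1 := hγlip.comp_eVariationOn_le
      (g := (id : ℝ → ℝ)) (s := univ ∩ Icc (0:ℝ) 1) (fun a ha => ha.2)
    have h2 : eVariationOn (id : ℝ → ℝ) (univ ∩ Icc (0:ℝ) 1) ≤ ENNReal.ofReal 1 := by
      simpa using (monotone_id.monotoneOn univ).eVariationOn_le (mem_univ (0:ℝ)) (mem_univ 1)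
    have h3 : eVariationOn γ (Icc (0:ℝ) 1) ≤
        (Real.toNNReal (C * d) : ENNReal) * eVariationOn (id : ℝ → ℝ) (univ ∩ Icc (0:ℝ) 1) := by
      simpa [univ_inter, Function.comp] using h1
    refine le_trans h3 ?_
    have : (Real.toNNReal (C * d) : ENNReal) = ENNReal.ofReal (C * d) := rfl
    rw [this]
    calc ENNReal.ofReal (C * d) * eVariationOn (id : ℝ → ℝ) (univ ∩ Icc (0:ℝ) 1)
        ≤ ENNReal.ofReal (C * d) * ENNReal.ofReal 1 := by
          exact mul_le_mul_right h2 _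
      _ = ENNReal.ofReal (C * d) := by rw [ENNReal.ofReal_one, mul_one]
  calc innerDist ({q : EuclideanSpace ℝ (Fin n) × EuclideanSpace ℝ (Fin m) | q.2 = f q.1} ∩
          Metric.ball ((0 : EuclideanSpace ℝ (Fin n)), f 0) δ) p q
      ≤ eVariationOn γ (Icc (0:ℝ) 1) := by
        refine iInf_le_of_le γ (iInf_le_of_le hγcont (iInf_le_of_le hγmem
          (iInf_le_of_le hγ0 (iInf_le_of_le hγ1 le_rfl))))
    _ ≤ ENNReal.ofReal (C * d) := hvar
    _ ≤ ENNReal.ofReal (C * ‖p - q‖) := by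
        apply ENNReal.ofReal_le_ofReal
        exact mul_le_mul_of_nonneg_left hdpq (by linarith)
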